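/- L^∘-grammars recognize all permutations of regular languages: for every regular language R over a finite alphabet Σ with ε ∉ R, there exists an L^∘-grammar G such that L(G) = perm(R). -/

import Mathlib

/-- Types of the Lambek calculus with the cyclic shift `L^∘`, built from
primitive types `P` by `\` (`ldiv A B = A \ B`), `/` (`rdiv B A = B / A`),
`·` (`mul`) and the cyclic shift `^∘` (`circ`). -/
inductive Fm (P : Type) : Type
  | prim : P → Fm P
  | ldiv : Fm P → Fm P → Fm P
  | rdiv : Fm P → Fm P → Fm P
  | mul  : Fm P → Fm P → Fm P
  | circ : Fm P → Fm P
deriving DecidableEq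

open Fm

/-- Derivability of sequents in the Lambek calculus with the cyclic shift `L^∘`.
The Boolean flag indicates whether the rule (cut) may be used:
`Dv P true` is `L^∘` (with cut), `Dv P false` is its cut-free part. -/
inductive Dv (P : Type) : Bool → List (Fm P) → Fm P → Prop
  | ax (c : Bool) (A : Fm P) :
      Dv P c [A] A
  | ldivL (c : Bool) (Γ Δ Pi : List (Fm P)) (A B C : Fm P) :
      Dv P c (Γ ++ B :: Δ) C → Dv P c Pi A → Pi ≠ [] →
      Dv P c (Γ ++ Pi ++ ldiv A B :: Δ) C
  | ldivR (c : Bool) (Pi : List (Fm P)) (A B : Fm P) :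
      Dv P c (A :: Pi) B → Pi ≠ [] →
      Dv P c Pi (ldiv A B)
  | rdivL (c : Bool) (Γ Δ Pi : List (Fm P)) (A B C : Fm P) :
      Dv P c (Γ ++ B :: Δ) C → Dv P c Pi A → Pi ≠ [] →
      Dv P c (Γ ++ rdiv B A :: (Pi ++ Δ)) C
  | rdivR (c : Bool) (Pi : List (Fm P)) (A B : Fm P) :
      Dv P c (Pi ++ [A]) B → Pi ≠ [] →
      Dv P c Pi (rdiv B A)
  | mulL (c : Bool) (Γ Δ : List (Fm P)) (A B C : Fm P) :
      Dv P c (Γ ++ A :: B :: Δ) C →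
      Dv P c (Γ ++ mul A B :: Δ) C
  | mulR (c : Bool) (Pi Psi : List (Fm P)) (A B : Fm P) :
      Dv P c Pi A → Dv P c Psi B → Pi ≠ [] → Psi ≠ [] →
      Dv P c (Pi ++ Psi) (mul A B)
  | circR (c : Bool) (Pi : List (Fm P)) (A : Fm P) :
      Dv P c Pi A →
      Dv P c Pi (circ A)
  | circL (c : Bool) (A B : Fm P) :
      Dv P c [B] (circ A) →
      Dv P c [circ B] (circ A)
  | circC (c : Bool) (Pi Psi : List (Fm P)) (A : Fm P) :
      Dv P c (Pi ++ Psi) (circ A) → Pi ≠ [] → Psi ≠ [] →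
      Dv P c (Psi ++ Pi) (circ A)
  | cut (Γ Δ Pi : List (Fm P)) (A B : Fm P) :
      Dv P true Pi A → Dv P true (Γ ++ A :: Δ) B → Pi ≠ [] →
      Dv P true (Γ ++ Pi ++ Δ) B

/-- The language recognized by a categorial grammar based on a calculus with
derivability relation `K`: the grammar has distinguished type `S` and finite
dictionary `R` (a list of pairs `(a, T)` meaning `a ▷ T`); a nonempty word
`a1…an` is recognized iff there are types `T1,…,Tn` with `ai ▷ Ti` and
`K ⊢ T1,…,Tn → S`. -/
def GLang {α Ty : Type} (K : List Ty → Ty → Prop) (S : Ty) (R : List (α × Ty)) :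
    Set (List α) :=
  { w | w ≠ [] ∧ ∃ Ts : List Ty, List.Forall₂ (fun a T => (a, T) ∈ R) w Ts ∧ K Ts S }

/-- The permutation closure `perm(L)` of a language `L`: all words obtained by
permuting the letters of a word of `L`. -/
def permClosure {α : Type} (L : Set (List α)) : Set (List α) :=
  { w | ∃ v ∈ L, w.Perm v }

namespace LcircAux

open Fm List

variable {β : Type}

/-- Cyclic closure of a set of words. -/
inductive Cyc (X : List β → Prop) : List β → Prop
  | base {x : List β} : X x → Cyc X x
  | rot {u v : List β} : Cyc X (u ++ v) → Cyc X (v ++ u)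

theorem Cyc_subset {X S : List β → Prop} (h1 : ∀ x, X x → S x)
    (h2 : ∀ u v, S (u ++ v) → S (v ++ u)) : ∀ x, Cyc X x → S x := by
  intro x hx
  induction hx with
  | base h => exact h1 _ h
  | rot h ih => exact h2 _ _ ih

/-- Interpretation of formulas in the language model over alphabet `β`. -/
def interp (v : ℕ → List β → Prop) : Fm ℕ → List β → Prop
  | .prim p => v p
  | .ldiv A B => fun x => ∀ u, interp v A u → interp v B (u ++ x)
  | .rdiv B A => fun x => ∀ u, interp v A u → interp v B (x ++ u)
  | .mul A B => fun x => ∃ y z, interp v A y ∧ interp v B z ∧ x = y ++ z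
  | .circ A => Cyc (interp v A)

/-- Interpretation of lists of formulas (concatenation of interpretations). -/
def interpL (v : ℕ → List β → Prop) : List (Fm ℕ) → List β → Prop
  | [] => fun x => x = []
  | A :: Γ => fun x => ∃ y z, interp v A y ∧ interpL v Γ z ∧ x = y ++ z

theorem interpL_append {v : ℕ → List β → Prop} {Γ Δ : List (Fm ℕ)} {x : List β} :
    interpL v (Γ ++ Δ) x ↔ ∃ y z, interpL v Γ y ∧ interpL v Δ z ∧ x = y ++ z := by
  induction Γ generalizing x with
  | nil =>
    simp only [List.nil_append, interpL]
    constructor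
    · intro h; exact ⟨[], x, rfl, h, rfl⟩
    · rintro ⟨y, z, rfl, h, rfl⟩; simpa using h
  | cons A Γ ih =>
    simp only [List.cons_append, interpL]
    constructor
    · rintro ⟨y, z, hy, hz, rfl⟩
      rcases ih.mp hz with ⟨z1, z2, h1, h2, rfl⟩
      exact ⟨y ++ z1, z2, ⟨y, z1, hy, h1, rfl⟩, h2, by simp⟩
    · rintro ⟨y, z, ⟨y1, y2, hy1, hy2, rfl⟩, hz, rfl⟩
      exact ⟨y1, y2 ++ z, hy1, ih.mpr ⟨y2, z, hy2, hz, rfl⟩, by simp⟩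

theorem interpL_single {v : ℕ → List β → Prop} {A : Fm ℕ} {x : List β} :
    interpL v [A] x ↔ interp v A x := by
  simp only [interpL]
  constructor
  · rintro ⟨y, z, hy, rfl, rfl⟩; simpa using hy
  · intro h; exact ⟨x, [], h, rfl, by simp⟩

theorem interpL_cons {v : ℕ → List β → Prop} {A : Fm ℕ} {Γ : List (Fm ℕ)} {x : List β} :
    interpL v (A :: Γ) x ↔ ∃ y z, interp v A y ∧ interpL v Γ z ∧ x = y ++ z :=
  Iff.rfl

/-- Soundness of `L^∘` (with cut) in language models. -/
theorem sound (v : ℕ → List β → Prop) {c : Bool} {Γ : List (Fm ℕ)} {A : Fm ℕ}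
    (h : Dv ℕ c Γ A) : ∀ x, interpL v Γ x → interp v A x := by
  induction h with
  | ax c A => intro x hx; exact interpL_single.mp hx
  | ldivL c Γ Δ Pi A B C hB hA hne ihB ihA =>
    intro x hx
    rw [List.append_assoc, interpL_append] at hx
    rcases hx with ⟨y, z, hy, hz, rfl⟩
    rw [interpL_append] at hz
    rcases hz with ⟨p, t, hp, ht, rfl⟩
    rw [interpL_cons] at ht
    rcases ht with ⟨t1, d, ht1, hd, rfl⟩
    have hpA : interp v A p := ihA p hp
    have hBt : interp v B (p ++ t1) := ht1 p hpA
    have : interpL v (Γ ++ B :: Δ) (y ++ ((p ++ t1) ++ d)) :=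
      interpL_append.mpr ⟨y, (p ++ t1) ++ d, hy, interpL_cons.mpr ⟨p ++ t1, d, hBt, hd, rfl⟩, rfl⟩
    have := ihB _ this
    simpa [List.append_assoc] using this
  | ldivR c Pi A B hAB hne ih =>
    intro x hx
    show ∀ u, interp v A u → interp v B (u ++ x)
    intro u hu
    exact ih _ (interpL_cons.mpr ⟨u, x, hu, hx, rfl⟩)
  | rdivL c Γ Δ Pi A B C hB hA hne ihB ihA =>
    intro x hx
    rw [interpL_append] at hx
    rcases hx with ⟨y, z, hy, hz, rfl⟩
    rw [interpL_cons] at hz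
    rcases hz with ⟨t, z2, ht, hz2, rfl⟩
    rw [interpL_append] at hz2
    rcases hz2 with ⟨p, d, hp, hd, rfl⟩
    have hpA : interp v A p := ihA p hp
    have hBt : interp v B (t ++ p) := ht p hpA
    have : interpL v (Γ ++ B :: Δ) (y ++ ((t ++ p) ++ d)) :=
      interpL_append.mpr ⟨y, (t ++ p) ++ d, hy, interpL_cons.mpr ⟨t ++ p, d, hBt, hd, rfl⟩, rfl⟩
    have := ihB _ this
    simpa [List.append_assoc] using this
  | rdivR c Pi A B hAB hne ih =>
    intro x hx
    show ∀ u, interp v A u → interp v B (x ++ u)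
    intro u hu
    exact ih _ (interpL_append.mpr ⟨x, u, hx, interpL_single.mpr hu, rfl⟩)
  | mulL c Γ Δ A B C hABC ih =>
    intro x hx
    rw [interpL_append] at hx
    rcases hx with ⟨y, z, hy, hz, rfl⟩
    rw [interpL_cons] at hz
    rcases hz with ⟨t, d, ht, hd, rfl⟩
    rcases ht with ⟨t1, t2, ht1, ht2, rfl⟩
    have : interpL v (Γ ++ A :: B :: Δ) (y ++ (t1 ++ (t2 ++ d))) :=
      interpL_append.mpr ⟨y, t1 ++ (t2 ++ d), hy,
        interpL_cons.mpr ⟨t1, t2 ++ d, ht1, interpL_cons.mpr ⟨t2, d, ht2, hd, rfl⟩, rfl⟩, rfl⟩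
    have := ih _ this
    simpa [List.append_assoc] using this
  | mulR c Pi Psi A B hA hB hne1 hne2 ihA ihB =>
    intro x hx
    rw [interpL_append] at hx
    rcases hx with ⟨y, z, hy, hz, rfl⟩
    exact ⟨y, z, ihA y hy, ihB z hz, rfl⟩
  | circR c Pi A hA ih =>
    intro x hx
    exact Cyc.base (ih x hx)
  | circL c A B hB ih =>
    intro x hx
    have hx' : Cyc (interp v B) x := interpL_single.mp hx
    exact Cyc_subset (fun y hy => ih y (interpL_single.mpr hy))
      (fun u v h => Cyc.rot h) x hx'
  | circC c Pi Psi A hA hne1 hne2 ih =>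
    intro x hx
    rw [interpL_append] at hx
    rcases hx with ⟨y, z, hy, hz, rfl⟩
    have : interpL v (Pi ++ Psi) (z ++ y) := interpL_append.mpr ⟨z, y, hz, hy, rfl⟩
    exact Cyc.rot (ih _ this)
  | cut Γ Δ Pi A B hPi hB hne ihPi ihB =>
    intro x hx
    rw [List.append_assoc, interpL_append] at hx
    rcases hx with ⟨y, z, hy, hz, rfl⟩
    rw [interpL_append] at hz
    rcases hz with ⟨p, d, hp, hd, rfl⟩
    have : interpL v (Γ ++ A :: Δ) (y ++ (p ++ d)) :=
      interpL_append.mpr ⟨y, p ++ d, hy, interpL_cons.mpr ⟨p, d, ihPi p hp, hd, rfl⟩, rfl⟩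
    have := ihB _ this
    simpa [List.append_assoc] using this

end LcircAux
namespace LcircAux

/-- Rotation, allowing empty sides. -/
theorem rotDv {c : Bool} {Pi Psi : List (Fm ℕ)} {A : Fm ℕ}
    (h : Dv ℕ c (Pi ++ Psi) (circ A)) : Dv ℕ c (Psi ++ Pi) (circ A) := by
  rcases eq_or_ne Pi [] with rfl | h1
  · simpa using h
  rcases eq_or_ne Psi [] with rfl | h2
  · simpa using h
  exact Dv.circC c Pi Psi A h h1 h2

/-- Consuming a left-division type whose argument is the rest of the
(cyclically rearranged) antecedent. -/
theorem consume {mk X : Fm ℕ} {P Q : List (Fm ℕ)} {A C : Fm ℕ}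
    (h1 : Dv ℕ true (mk :: (P ++ Q)) (circ A))
    (h2 : Dv ℕ true [X] (circ C)) :
    Dv ℕ true (mk :: (P ++ ldiv (circ A) X :: Q)) (circ C) := by
  have hrot : Dv ℕ true ((Q ++ (mk :: P)) ++ []) (circ A) := by
    simpa using rotDv (Pi := mk :: P) (Psi := Q) (by simpa using h1)
  have hld := Dv.ldivL true [] [] (Q ++ (mk :: P)) (circ A) X (circ C)
    (by simpa using h2) (by simpa using hrot) (by simp)
  have : Dv ℕ true ((Q ++ (mk :: P)) ++ [ldiv (circ A) X]) (circ C) := by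
    simpa using hld
  have := rotDv (Pi := Q) (Psi := (mk :: P) ++ [ldiv (circ A) X])
    (by simpa [List.append_assoc] using this)
  simpa [List.append_assoc] using this

section Gram

variable {α : Type} {σ : Type} [Fintype σ] (M : DFA α σ)

/-- Encoding of states as positive primitive types (`0` is reserved). -/
noncomputable def enc (q : σ) : ℕ := (Fintype.equivFin σ q : ℕ) + 1

/-- Marker type for a state. -/
noncomputable def mq (q : σ) : Fm ℕ := circ (prim (enc q))

/-- Transition type. -/
noncomputable def Cty (q : σ) (a : α) : Fm ℕ := ldiv (mq q) (mq (M.step q a))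

/-- Final transition type. -/
noncomputable def Fty (q : σ) : Fm ℕ := ldiv (mq q) (circ (prim (0 : ℕ)))

/-- Chain types along a word. -/
noncomputable def Tc (q : σ) : List α → List (Fm ℕ)
  | [] => []
  | a :: l => Cty M q a :: Tc (M.step q a) l

@[simp] theorem Tc_nil (q : σ) : Tc M q [] = [] := rfl

@[simp] theorem Tc_cons (q : σ) (a : α) (l : List α) :
    Tc M q (a :: l) = Cty M q a :: Tc M (M.step q a) l := rfl

theorem length_Tc (q : σ) (l : List α) : (Tc M q l).length = l.length := by
  induction l generalizing q with
  | nil => rfl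
  | cons a l ih => simp [ih]

theorem Tc_append_singleton (q : σ) (u : List α) (a : α) :
    Tc M q (u ++ [a]) = Tc M q u ++ [Cty M (M.evalFrom q u) a] := by
  induction u generalizing q with
  | nil => simp [DFA.evalFrom]
  | cons b u ih => simp [ih, DFA.evalFrom]

/-- Core lemma: any permutation of the chain types of a path, preceded by the
marker of the initial state, derives the marker of the final state. -/
theorem core (u : List α) : ∀ (q : σ) (B : List (Fm ℕ)), B.Perm (Tc M q u) →
    Dv ℕ true (mq q :: B) (mq (M.evalFrom q u)) := by
  induction u using List.reverseRecOn with
  | nil =>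
    intro q B hB
    have : B = [] := hB.eq_nil
    subst this
    simpa [DFA.evalFrom, mq] using Dv.ax true (mq q)
  | append_singleton u a ih =>
    intro q B hB
    rw [Tc_append_singleton] at hB
    set r := M.evalFrom q u with hr
    have hmem : Cty M r a ∈ B := hB.mem_iff.mpr (by simp)
    obtain ⟨P, Q, rfl⟩ := List.append_of_mem hmem
    have hPQ : (P ++ Q).Perm (Tc M q u) := by
      have h1 : (Cty M r a :: (P ++ Q)).Perm (P ++ Cty M r a :: Q) :=
        List.perm_middle.symm
      have h2 := h1.trans hB
      have h3 : (Tc M q u ++ [Cty M r a]).Perm (Cty M r a :: Tc M q u) :=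
        List.perm_append_singleton _ _
      exact (h2.trans h3).cons_inv
    have h1 : Dv ℕ true (mq q :: (P ++ Q)) (circ (prim (enc r))) := ih q _ hPQ
    have h2 : Dv ℕ true [mq (M.step r a)] (circ (prim (enc (M.step r a)))) :=
      Dv.ax true (mq (M.step r a))
    have := consume (mk := mq q) h1 h2
    have heval : M.evalFrom q (u ++ [a]) = M.step r a := by
      rw [hr]; exact M.evalFrom_append_singleton q u a
    rw [heval]
    simpa [Cty, mq] using this

end Gram

end LcircAux
namespace LcircAux

attribute [local instance] Classical.propDecidable

section Gram2

variable {α : Type} [Fintype α] {σ : Type} [Fintype σ] (M : DFA α σ)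

/-- The dictionary of the grammar. -/
noncomputable def rel : List (α × Fm ℕ) :=
  (Finset.univ : Finset (σ × α)).toList.flatMap fun p =>
    (p.2, Cty M p.1 p.2) ::
      (if M.step p.1 p.2 ∈ M.accept then [(p.2, Fty p.1)] else [])

theorem mem_rel_C (q : σ) (a : α) : (a, Cty M q a) ∈ rel M := by
  rw [rel, List.mem_flatMap]
  exact ⟨(q, a), by simp, by simp⟩

theorem mem_rel_F (q : σ) (a : α) (h : M.step q a ∈ M.accept) :
    (a, Fty q) ∈ rel M := by
  rw [rel, List.mem_flatMap]
  exact ⟨(q, a), by simp, by simp [h]⟩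

theorem mem_rel_elim {a : α} {T : Fm ℕ} (h : (a, T) ∈ rel M) :
    ∃ q : σ, T = Cty M q a ∨ (M.step q a ∈ M.accept ∧ T = Fty q) := by
  rw [rel, List.mem_flatMap] at h
  obtain ⟨p, -, hp⟩ := h
  rcases List.mem_cons.mp hp with h | h
  · exact ⟨p.1, Or.inl (by cases h; rfl)⟩
  · by_cases hacc : M.step p.1 p.2 ∈ M.accept
    · rw [if_pos hacc] at h
      simp only [List.mem_singleton] at h
      cases h
      exact ⟨p.1, Or.inr ⟨hacc, rfl⟩⟩
    · rw [if_neg hacc] at h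
      simp at h

variable (R : Language α)

/-- Interpretation of a state: words that are permutations of words leading
from the start state to that state. -/
def vstate (q : σ) : List α → Prop := fun x => ∃ u, x.Perm u ∧ M.evalFrom M.start u = q

/-- The valuation of primitive types. -/
noncomputable def val : ℕ → List α → Prop
  | 0 => fun x => ∃ u ∈ R, x.Perm u
  | n + 1 => fun x =>
      if h : n < Fintype.card σ then vstate M ((Fintype.equivFin σ).symm ⟨n, h⟩) x else False

theorem val_enc (q : σ) : val M R (enc q) = vstate M q := by
  funext x
  simp only [val, enc]
  rw [dif_pos (Fintype.equivFin σ q).isLt]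
  congr 1
  simp

theorem vstate_rot (q : σ) (u v : List α) (h : vstate M q (u ++ v)) :
    vstate M q (v ++ u) := by
  obtain ⟨w, hp, hw⟩ := h
  exact ⟨w, (List.perm_append_comm).trans hp, hw⟩

theorem val0_rot (u v : List α) (h : val M R 0 (u ++ v)) : val M R 0 (v ++ u) := by
  obtain ⟨w, hw, hp⟩ := h
  exact ⟨w, hw, (List.perm_append_comm).trans hp⟩

theorem cyc_vstate {q : σ} {x : List α} (h : Cyc (val M R (enc q)) x) :
    vstate M q x := by
  rw [val_enc] at h
  exact Cyc_subset (fun y hy => hy) (vstate_rot M q) x h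

theorem interp_letter (hM : M.accepts = R) {a : α} {T : Fm ℕ}
    (h : (a, T) ∈ rel M) : interp (val M R) T [a] := by
  obtain ⟨q, hq | ⟨hacc, hq⟩⟩ := mem_rel_elim M h
  · subst hq
    show ∀ u, interp (val M R) (mq q) u →
      interp (val M R) (mq (M.step q a)) (u ++ [a])
    intro u hu
    have hu' : vstate M q u := cyc_vstate M R (by exact hu)
    obtain ⟨w, hp, hw⟩ := hu'
    refine Cyc.base (show val M R (enc (M.step q a)) (u ++ [a]) from ?_)
    rw [val_enc]
    refine ⟨w ++ [a], hp.append_right [a], ?_⟩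
    rw [M.evalFrom_append_singleton, hw]
  · subst hq
    show ∀ u, interp (val M R) (mq q) u →
      interp (val M R) (circ (prim 0)) (u ++ [a])
    intro u hu
    have hu' : vstate M q u := cyc_vstate M R (by exact hu)
    obtain ⟨w, hp, hw⟩ := hu'
    refine Cyc.base ?_
    show ∃ u' ∈ R, (u ++ [a]).Perm u'
    refine ⟨w ++ [a], ?_, hp.append_right [a]⟩
    rw [← hM, DFA.mem_accepts]
    show M.evalFrom M.start (w ++ [a]) ∈ M.accept
    rw [M.evalFrom_append_singleton, hw]
    exact hacc

theorem interpL_of_forall₂ (hM : M.accepts = R) {w : List α} {Ts : List (Fm ℕ)}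
    (h : List.Forall₂ (fun a T => (a, T) ∈ rel M) w Ts) :
    interpL (val M R) Ts w := by
  induction h with
  | nil => rfl
  | cons ha hrest ih =>
    exact ⟨[_], _, interp_letter M R hM ha, ih, rfl⟩

/-- Soundness: every word recognized by the grammar is a permutation of a word of `R`. -/
theorem soundness (hM : M.accepts = R) {w : List α} {Ts : List (Fm ℕ)}
    (hf : List.Forall₂ (fun a T => (a, T) ∈ rel M) w Ts)
    (hd : Dv ℕ true Ts (ldiv (mq M.start) (circ (prim 0)))) :
    ∃ u ∈ R, w.Perm u := by
  have hw : interpL (val M R) Ts w := interpL_of_forall₂ M R hM hf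
  have hS := sound (val M R) hd w hw
  have h0 : interp (val M R) (mq M.start) [] := by
    refine Cyc.base (show val M R (enc M.start) [] from ?_)
    rw [val_enc]
    exact ⟨[], List.Perm.refl [], rfl⟩
  have := hS [] h0
  simp only [List.nil_append] at this
  exact Cyc_subset (fun y hy => hy) (val0_rot M R) w this

end Gram2

end LcircAux
namespace LcircAux

theorem lift_perm {γ δ : Type} {w m : List γ} (h : w.Perm m) :
    ∀ l₂ : List (γ × δ), l₂.map Prod.fst = m →
      ∃ l₁ : List (γ × δ), l₁.map Prod.fst = w ∧ l₁.Perm l₂ := by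
  induction h with
  | nil => intro l₂ h2; exact ⟨l₂, h2, List.Perm.refl _⟩
  | cons x h ih =>
    intro l₂ h2
    cases l₂ with
    | nil => simp at h2
    | cons p l₂' =>
      simp only [List.map_cons, List.cons.injEq] at h2
      obtain ⟨h21, h22⟩ := h2
      obtain ⟨l₁, hl₁, hp⟩ := ih l₂' h22
      exact ⟨p :: l₁, by simp [hl₁, h21], hp.cons p⟩
  | swap x y l =>
    intro l₂ h2
    match l₂ with
    | [] => simp at h2
    | [p] => simp at h2
    | p :: q :: r =>
      simp only [List.map_cons, List.cons.injEq] at h2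
      obtain ⟨hp1, hq1, hr⟩ := h2
      exact ⟨q :: p :: r, by simp [hp1, hq1, hr], List.Perm.swap p q r⟩
  | trans h1 h2 ih1 ih2 =>
    intro l₂ hl
    obtain ⟨lm, hlm, hpm⟩ := ih2 l₂ hl
    obtain ⟨l₁, h1', hp1⟩ := ih1 lm hlm
    exact ⟨l₁, h1', hp1.trans hpm⟩

theorem forall₂_of_mem {γ δ : Type} {rl : List (γ × δ)} :
    ∀ {l : List (γ × δ)}, (∀ p ∈ l, p ∈ rl) →
      List.Forall₂ (fun a T => (a, T) ∈ rl) (l.map Prod.fst) (l.map Prod.snd) := by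
  intro l
  induction l with
  | nil => intro _; simp
  | cons p l ih =>
    intro h
    simp only [List.map_cons]
    exact List.Forall₂.cons (by simpa using h p (by simp))
      (ih fun q hq => h q (List.mem_cons_of_mem _ hq))

section Gram3

attribute [local instance] Classical.propDecidable

variable {α : Type} [Fintype α] {σ : Type} [Fintype σ] (M : DFA α σ)

theorem zip_Tc_mem : ∀ (u : List α) (q : σ), ∀ p ∈ u.zip (Tc M q u), p ∈ rel M := by
  intro u
  induction u with
  | nil => simp
  | cons a l ih =>
    intro q p hp
    rw [Tc_cons, List.zip_cons_cons] at hp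
    rcases List.mem_cons.mp hp with rfl | hp
    · exact mem_rel_C M q a
    · exact ih _ p hp

theorem top (u' : List α) {Ts : List (Fm ℕ)}
    (hperm : Ts.Perm (Tc M M.start u' ++ [Fty (M.evalFrom M.start u')])) :
    Dv ℕ true (mq M.start :: Ts) (circ (prim 0)) := by
  set r := M.evalFrom M.start u' with hr
  have hmem : Fty r ∈ Ts := hperm.mem_iff.mpr (by simp)
  obtain ⟨P, Q, rfl⟩ := List.append_of_mem hmem
  have hPQ : (P ++ Q).Perm (Tc M M.start u') := by
    have h1 : (Fty r :: (P ++ Q)).Perm (P ++ Fty r :: Q) := List.perm_middle.symm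
    have h2 := h1.trans hperm
    have h3 : (Tc M M.start u' ++ [Fty r]).Perm (Fty r :: Tc M M.start u') :=
      List.perm_append_singleton _ _
    exact (h2.trans h3).cons_inv
  have h1 : Dv ℕ true (mq M.start :: (P ++ Q)) (circ (prim (enc r))) :=
    core M u' M.start _ hPQ
  have h2 : Dv ℕ true [circ (prim (0 : ℕ))] (circ (prim (0 : ℕ))) := Dv.ax _ _
  have := consume (mk := mq M.start) h1 h2
  simpa [Fty, mq] using this

theorem completeness (R : Language α) (hM : M.accepts = R) {w u : List α}
    (hu : u ∈ R) (hune : u ≠ []) (hp : w.Perm u) :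
    ∃ Ts : List (Fm ℕ), List.Forall₂ (fun a T => (a, T) ∈ rel M) w Ts ∧
      Dv ℕ true Ts (ldiv (mq M.start) (circ (prim 0))) := by
  obtain ⟨u', a, rfl⟩ : ∃ u' a, u = u' ++ [a] := by
    rcases List.eq_nil_or_concat u with rfl | ⟨u', a, rfl⟩
    · exact absurd rfl hune
    · exact ⟨u', a, List.concat_eq_append⟩
  set r := M.evalFrom M.start u' with hr
  have hacc : M.step r a ∈ M.accept := by
    have : u' ++ [a] ∈ M.accepts := by rw [hM]; exact hu
    rw [DFA.mem_accepts] at this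
    rwa [show M.eval (u' ++ [a]) = M.step r a from M.evalFrom_append_singleton _ _ _] at this
  set pu : List (α × Fm ℕ) := u'.zip (Tc M M.start u') ++ [(a, Fty r)] with hpu
  have hpu_fst : pu.map Prod.fst = u' ++ [a] := by
    rw [hpu, List.map_append, List.map_fst_zip (le_of_eq (length_Tc M M.start u').symm)]
    simp
  obtain ⟨pw, hpw_fst, hpw_perm⟩ := lift_perm hp pu hpu_fst
  have hmem : ∀ p ∈ pw, p ∈ rel M := by
    intro p hp'
    have hppu : p ∈ pu := hpw_perm.mem_iff.mp hp'
    rcases List.mem_append.mp hppu with h | h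
    · exact zip_Tc_mem M u' M.start p h
    · rw [List.mem_singleton] at h
      subst h
      exact mem_rel_F M r a hacc
  refine ⟨pw.map Prod.snd, ?_, ?_⟩
  · rw [← hpw_fst]; exact forall₂_of_mem hmem
  · have hTs : (pw.map Prod.snd).Perm (Tc M M.start u' ++ [Fty r]) := by
      have hsnd : pu.map Prod.snd = Tc M M.start u' ++ [Fty r] := by
        rw [hpu, List.map_append, List.map_snd_zip (le_of_eq (length_Tc M M.start u'))]
        simp
      rw [← hsnd]
      exact hpw_perm.map Prod.snd
    have hne : pw.map Prod.snd ≠ [] := by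
      intro h
      have hlen := hTs.length_eq
      rw [h] at hlen
      simp at hlen
    exact Dv.ldivR true _ _ _ (top M u' hTs) hne

end Gram3

end LcircAux

/-- `L^∘`-grammars recognize all permutations of regular languages: for every
regular language `R` over a finite alphabet with `ε ∉ R`, some `L^∘`-grammar
recognizes exactly `perm(R)`. -/
theorem Lcirc_grammars_recognize_perm_of_regular (α : Type) [Fintype α]
    (R : Language α) (hreg : R.IsRegular) (hε : [] ∉ R) :
    ∃ (S : Fm ℕ) (rel : List (α × Fm ℕ)),
      GLang (Dv ℕ true) S rel = permClosure R := by
  obtain ⟨σ, hfin, M, hM⟩ := hreg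
  letI := hfin
  refine ⟨ldiv (LcircAux.mq M.start) (circ (prim 0)), LcircAux.rel M, ?_⟩
  ext w
  constructor
  · rintro ⟨hne, Ts, hf, hd⟩
    exact LcircAux.soundness M R hM hf hd
  · rintro ⟨u, hu, hp⟩
    have hune : u ≠ [] := by rintro rfl; exact hε hu
    have hwne : w ≠ [] := by
      intro h
      rw [h] at hp
      exact hune hp.nil_eq.symm
    obtain ⟨Ts, hf, hd⟩ := LcircAux.completeness M R hM hu hune hp
    exact ⟨hwne, Ts, hf, hd⟩
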